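/- Let X be a Banach space with the Daugavet property. Then the norm of X is octahedral: for every finite-dimensional subspace Y ⊆ X and every ε > 0 there exists x ∈ S_X such that ‖y + λx‖ > (1 − ε)(‖y‖ + |λ|) for all y ∈ Y and all λ ∈ ℝ. -/

import Mathlib

set_option maxHeartbeats 1000000
set_option synthInstance.maxHeartbeats 400000

private lemma slice_nonempty_aux {X : Type*} [NormedAddCommGroup X] [NormedSpace ℝ X]
    (f : X →L[ℝ] ℝ) (β : ℝ) (hβ : 0 < β) :
    ∃ y : X, ‖y‖ ≤ 1 ∧ f y > ‖f‖ - β := by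
  by_contra h
  push_neg at h
  have h0 : (0:ℝ) ≤ ‖f‖ - β := by
    have := h 0 (by simp)
    simpa using this
  have hb : ∀ z : X, ‖f z‖ ≤ (‖f‖ - β) * ‖z‖ := by
    intro z
    rcases eq_or_ne z 0 with rfl | hz
    · simp
    · have hzn : (0:ℝ) < ‖z‖ := norm_pos_iff.mpr hz
      have h1 := h (‖z‖⁻¹ • z) (by
        rw [norm_smul, norm_inv, norm_norm]
        exact le_of_eq (inv_mul_cancel₀ hzn.ne'))
      have h2 := h (-(‖z‖⁻¹ • z)) (by
        rw [norm_neg, norm_smul, norm_inv, norm_norm]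
        exact le_of_eq (inv_mul_cancel₀ hzn.ne'))
      rw [map_neg] at h2
      have habs : |f (‖z‖⁻¹ • z)| ≤ ‖f‖ - β := abs_le.mpr ⟨by linarith, h1⟩
      rw [map_smul, smul_eq_mul, abs_mul, abs_inv, abs_norm] at habs
      rw [Real.norm_eq_abs]
      calc |f z| = ‖z‖ * (‖z‖⁻¹ * |f z|) := by field_simp
        _ ≤ ‖z‖ * (‖f‖ - β) := by
            apply mul_le_mul_of_nonneg_left habs hzn.le
        _ = (‖f‖ - β) * ‖z‖ := mul_comm _ _
  have := ContinuousLinearMap.opNorm_le_bound f h0 hb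
  linarith

private lemma slice_in_slice_aux {X : Type*} [NormedAddCommGroup X] [NormedSpace ℝ X]
    (hDP : ∀ ε > (0:ℝ), ∀ x : X, ‖x‖ = 1 → ∀ f : X →L[ℝ] ℝ, f ≠ 0 → ∀ α > (0:ℝ),
      ∃ y : X, ‖y‖ ≤ 1 ∧ f y > ‖f‖ - α ∧ ‖x + y‖ > 2 - ε)
    (ε : ℝ) (hε : 0 < ε) (x : X) (hx : ‖x‖ = 1)
    (f : X →L[ℝ] ℝ) (hf : f ≠ 0) (α : ℝ) (hα : 0 < α) :
    ∃ g : X →L[ℝ] ℝ, g ≠ 0 ∧ ∃ β > (0:ℝ), ∀ y : X, ‖y‖ ≤ 1 → g y > ‖g‖ - β →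
      f y > ‖f‖ - α ∧ ‖x + y‖ > 2 - ε := by
  set ε₁ := min ε 1 with hε₁def
  have hε₁ : 0 < ε₁ := lt_min hε one_pos
  have hε₁le : ε₁ ≤ 1 := min_le_right _ _
  have hε₁ε : ε₁ ≤ ε := min_le_left _ _
  have hfn : 0 < ‖f‖ := norm_pos_iff.mpr hf
  set n : ℝ := (α/3 + 2*‖f‖) * (2/ε₁) with hndef
  have hn : 0 < n := by positivity
  set ε' : ℝ := min (ε₁/8) (α/(6*n)) with hε'def
  have hε' : 0 < ε' := lt_min (by positivity) (by positivity)
  have hε'1 : ε' ≤ ε₁/8 := min_le_left _ _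
  have hε'2 : ε' ≤ α/(6*n) := min_le_right _ _
  obtain ⟨y₀, hy₀1, hy₀2, hy₀3⟩ := hDP ε' hε' x hx f hf (α/3) (by positivity)
  have hxy₀ : x + y₀ ≠ 0 := by
    intro h0
    rw [h0, norm_zero] at hy₀3
    linarith
  obtain ⟨g₀, hg₀n, hg₀x⟩ := exists_dual_vector ℝ (x + y₀) (norm_ne_zero_iff.mpr hxy₀)
  refine ⟨f + n • g₀, ?_, α/3, by positivity, ?_⟩
  · -- nonzero since ‖n • g₀‖ = n > ‖f‖
    intro h0
    have hne : f = -(n • g₀) := eq_neg_of_add_eq_zero_left h0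
    have h1 : ‖f‖ = n := by
      rw [hne, norm_neg]
      rw [norm_smul n g₀, hg₀n, mul_one, Real.norm_eq_abs, abs_of_pos hn]
    have hnbig : 2*‖f‖ ≤ n := by
      have h2 : (2:ℝ) ≤ 2/ε₁ := by
        rw [le_div_iff₀ hε₁]; linarith
      calc 2*‖f‖ = (0 + 2*‖f‖)*1 := by ring
        _ ≤ (α/3 + 2*‖f‖) * (2/ε₁) := by
            apply mul_le_mul (by linarith) (by linarith) one_pos.le (by positivity)
        _ = n := rfl
    linarith
  · intro y hy1 hy2
    have hgy₀ : (f + n • g₀) y₀ ≤ ‖f + n • g₀‖ := by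
      calc (f + n • g₀) y₀ ≤ |(f + n • g₀) y₀| := le_abs_self _
        _ ≤ ‖f + n • g₀‖ * ‖y₀‖ := (f + n • g₀).le_opNorm y₀
        _ ≤ ‖f + n • g₀‖ * 1 := by
            apply mul_le_mul_of_nonneg_left hy₀1 (norm_nonneg _)
        _ = _ := mul_one _
    have happ : ∀ z : X, (f + n • g₀) z = f z + n * g₀ z := by intro z; simp
    rw [happ] at hgy₀ hy2
    have bdd : ∀ (h : X →L[ℝ] ℝ) (z : X), ‖h‖ ≤ 1 → ‖z‖ ≤ 1 → |h z| ≤ 1 := by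
      intro h z h1 h2
      calc |h z| ≤ ‖h‖ * ‖z‖ := h.le_opNorm z
        _ ≤ 1 * 1 := mul_le_mul h1 h2 (norm_nonneg _) zero_le_one
        _ = 1 := mul_one _
    have hfx : |f y| ≤ ‖f‖ := by
      calc |f y| ≤ ‖f‖ * ‖y‖ := f.le_opNorm y
        _ ≤ ‖f‖ * 1 := mul_le_mul_of_nonneg_left hy1 (norm_nonneg _)
        _ = ‖f‖ := mul_one _
    have hfy₀' : |f y₀| ≤ ‖f‖ := by
      calc |f y₀| ≤ ‖f‖ * ‖y₀‖ := f.le_opNorm y₀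
        _ ≤ ‖f‖ * 1 := mul_le_mul_of_nonneg_left hy₀1 (norm_nonneg _)
        _ = ‖f‖ := mul_one _
    have hg₀y : |g₀ y| ≤ 1 := bdd g₀ y hg₀n.le hy1
    have hg₀y₀ : |g₀ y₀| ≤ 1 := bdd g₀ y₀ hg₀n.le hy₀1
    have hg₀x' : |g₀ x| ≤ 1 := bdd g₀ x hg₀n.le (le_of_eq hx)
    have hsum : g₀ x + g₀ y₀ > 2 - ε' := by
      have : g₀ (x + y₀) = g₀ x + g₀ y₀ := map_add _ _ _
      rw [← this, hg₀x]; exact hy₀3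
    have key : f y + n * g₀ y > f y₀ + n * g₀ y₀ - α/3 := by linarith
    have hstep : n * g₀ y > n * g₀ y₀ - (α/3 + 2*‖f‖) := by
      have h1 : f y₀ - f y ≥ -(2*‖f‖) := by
        have := abs_le.mp hfx; have := abs_le.mp hfy₀'; linarith
      linarith
    have hdiv : g₀ y > g₀ y₀ - (α/3 + 2*‖f‖)/n := by
      have h1 : g₀ y₀ - g₀ y < (α/3 + 2*‖f‖)/n := by
        rw [lt_div_iff₀ hn]
        nlinarith
      linarith
    have hval : (α/3 + 2*‖f‖)/n = ε₁/2 := by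
      rw [hndef]
      field_simp
    rw [hval] at hdiv
    constructor
    · have hgy₀low : g₀ y₀ > 1 - ε' := by
        have := abs_le.mp hg₀x'; linarith
      have hdiff : g₀ y₀ - g₀ y ≥ -ε' := by
        have := abs_le.mp hg₀y; linarith
      have hmul : n * (g₀ y₀ - g₀ y) ≥ n * (-ε') :=
        mul_le_mul_of_nonneg_left hdiff hn.le
      have hnε' : n * ε' ≤ α/6 := by
        have h1 : n * ε' ≤ n * (α/(6*n)) := mul_le_mul_of_nonneg_left hε'2 hn.le
        calc n * ε' ≤ n * (α/(6*n)) := h1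
          _ = α/6 := by field_simp
      nlinarith
    · have hlow : ‖x + y‖ ≥ g₀ (x + y) := by
        calc g₀ (x+y) ≤ |g₀ (x+y)| := le_abs_self _
          _ ≤ ‖g₀‖ * ‖x + y‖ := g₀.le_opNorm _
          _ = ‖x + y‖ := by rw [hg₀n, one_mul]
      have hg : g₀ (x + y) = g₀ x + g₀ y := map_add _ _ _
      have h2 : ‖x + y‖ > 2 - ε' - ε₁/2 := by
        rw [hg] at hlow; linarith
      have h3 : ‖x + y‖ > 2 - ε₁ := by linarith
      linarith

private lemma multi_slice_aux {X : Type*} [NormedAddCommGroup X] [NormedSpace ℝ X]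
    [Nontrivial X]
    (hDP : ∀ ε > (0:ℝ), ∀ x : X, ‖x‖ = 1 → ∀ f : X →L[ℝ] ℝ, f ≠ 0 → ∀ α > (0:ℝ),
      ∃ y : X, ‖y‖ ≤ 1 ∧ f y > ‖f‖ - α ∧ ‖x + y‖ > 2 - ε)
    (s : Finset X) (hs : ∀ u ∈ s, ‖u‖ = 1) (δ : ℝ) (hδ : 0 < δ) :
    ∃ y : X, ‖y‖ ≤ 1 ∧ ∀ u ∈ s, ‖u + y‖ > 2 - δ := by
  suffices h : ∃ f : X →L[ℝ] ℝ, f ≠ 0 ∧ ∃ β > (0:ℝ), ∀ y : X, ‖y‖ ≤ 1 → f y > ‖f‖ - β →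
      ∀ u ∈ s, ‖u + y‖ > 2 - δ by
    obtain ⟨f, hf, β, hβ, hslice⟩ := h
    obtain ⟨y, hy1, hy2⟩ := slice_nonempty_aux f β hβ
    exact ⟨y, hy1, hslice y hy1 hy2⟩
  classical
  induction s using Finset.induction_on with
  | empty =>
      obtain ⟨x₀, hx₀⟩ := exists_ne (0 : X)
      obtain ⟨g, hg1, -⟩ := exists_dual_vector ℝ x₀ (norm_ne_zero_iff.mpr hx₀)
      refine ⟨g, ?_, 1, one_pos, fun y _ _ u hu => absurd hu (Finset.notMem_empty u)⟩
      intro h0; rw [h0, norm_zero] at hg1; norm_num at hg1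
  | insert _ _ hu ih =>
      rename_i u t
      obtain ⟨f, hf, β, hβ, hslice⟩ := ih (fun v hv => hs v (Finset.mem_insert_of_mem hv))
      obtain ⟨g, hg, β', hβ', hslice'⟩ :=
        slice_in_slice_aux hDP δ hδ u (hs u (Finset.mem_insert_self u t)) f hf β hβ
      refine ⟨g, hg, β', hβ', fun y hy1 hy2 v hv => ?_⟩
      rcases Finset.mem_insert.mp hv with rfl | hv
      · exact (hslice' y hy1 hy2).2
      · exact hslice y hy1 (hslice' y hy1 hy2).1 v hv

/-- the Daugavet property implies that the norm is octahedral. -/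
theorem stmt5 {X : Type*} [NormedAddCommGroup X] [NormedSpace ℝ X] [CompleteSpace X]
    [Nontrivial X]
    (hDP : ∀ ε > (0:ℝ), ∀ x : X, ‖x‖ = 1 → ∀ f : X →L[ℝ] ℝ, f ≠ 0 → ∀ α > (0:ℝ),
      ∃ y : X, ‖y‖ ≤ 1 ∧ f y > ‖f‖ - α ∧ ‖x + y‖ > 2 - ε)
    (Y : Subspace ℝ X) [FiniteDimensional ℝ Y] (ε : ℝ) (hε : 0 < ε) :
    ∃ x : X, ‖x‖ = 1 ∧ ∀ y ∈ Y, ∀ l : ℝ,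
      ‖y + l • x‖ ≥ (1 - ε) * (‖y‖ + |l|) := by
  classical
  set ε₀ : ℝ := min ε 1 with hε₀def
  have hε₀ : 0 < ε₀ := lt_min hε one_pos
  have hε₀1 : ε₀ ≤ 1 := min_le_right _ _
  have hε₀ε : ε₀ ≤ ε := min_le_left _ _
  set δ : ℝ := ε₀ / 8 with hδdef
  have hδ : 0 < δ := by positivity
  set S : Set Y := Metric.sphere (0:Y) 1 with hSdef
  have hScomp : IsCompact S := isCompact_sphere 0 1
  have hcover : S ⊆ ⋃ u ∈ S, Metric.ball u δ := fun u hu =>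
    Set.mem_biUnion hu (Metric.mem_ball_self hδ)
  obtain ⟨b, hbS, hbfin, hbcover⟩ :=
    hScomp.elim_finite_subcover_image (fun u _ => Metric.isOpen_ball) hcover
  set s : Finset X := hbfin.toFinset.image (fun u : Y => (u : X)) with hsdef
  have hs_norm : ∀ u ∈ s, ‖u‖ = 1 := by
    intro u hu
    simp only [hsdef, Finset.mem_image, Set.Finite.mem_toFinset] at hu
    obtain ⟨v, hv, rfl⟩ := hu
    have hvS : v ∈ S := hbS hv
    rw [hSdef] at hvS
    simpa [mem_sphere_iff_norm] using hvS
  obtain ⟨y, hy1, hy2⟩ := multi_slice_aux hDP s hs_norm δ hδ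
  by_cases hbne : b.Nonempty
  · -- main case: Y has unit vectors
    obtain ⟨v₀, hv₀⟩ := hbne
    have hv₀s : ((v₀ : X)) ∈ s := by
      simp only [hsdef, Finset.mem_image, Set.Finite.mem_toFinset]
      exact ⟨v₀, hv₀, rfl⟩
    have hv₀n : ‖(v₀ : X)‖ = 1 := hs_norm _ hv₀s
    have hyl : 1 - δ < ‖y‖ := by
      have h1 := hy2 _ hv₀s
      have h2 : ‖(v₀:X) + y‖ ≤ ‖(v₀:X)‖ + ‖y‖ := norm_add_le _ _
      rw [hv₀n] at h2
      linarith
    have hypos : 0 < ‖y‖ := by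
      have : δ < 1 := by rw [hδdef]; linarith
      linarith
    set x : X := ‖y‖⁻¹ • y with hxdef
    have hxn : ‖x‖ = 1 := by
      rw [hxdef, norm_smul, norm_inv, norm_norm, inv_mul_cancel₀ hypos.ne']
    have hxy : ‖x - y‖ ≤ δ := by
      have h1 : x - y = (‖y‖⁻¹ - 1) • y := by
        rw [sub_smul, one_smul, hxdef]
      have hinv : 1 ≤ ‖y‖⁻¹ := by
        have hc : ‖y‖ * ‖y‖⁻¹ = 1 := mul_inv_cancel₀ hypos.ne'
        nlinarith
      have h2 : (0:ℝ) ≤ ‖y‖⁻¹ - 1 := by linarith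
      rw [h1, norm_smul, Real.norm_eq_abs, abs_of_nonneg h2]
      have h3 : (‖y‖⁻¹ - 1) * ‖y‖ = 1 - ‖y‖ := by
        field_simp
      rw [h3]; linarith
    have claimC : ∀ w : X, w ∈ Y → ‖w‖ = 1 → ‖w + x‖ > 2 - ε₀/2 := by
      intro w hwY hwn
      have hwS : (⟨w, hwY⟩ : Y) ∈ S := by
        rw [hSdef, mem_sphere_iff_norm, sub_zero]
        exact hwn
      have hmem := hbcover hwS
      simp only [Set.mem_iUnion] at hmem
      obtain ⟨v, hv, hball⟩ := hmem
      have hvs : ((v : X)) ∈ s := by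
        simp only [hsdef, Finset.mem_image, Set.Finite.mem_toFinset]
        exact ⟨v, hv, rfl⟩
      have hdist : ‖w - (v : X)‖ < δ := by
        have hd : dist (⟨w, hwY⟩ : Y) v < δ := Metric.mem_ball.mp hball
        rw [dist_eq_norm] at hd
        exact hd
      have h1 := hy2 _ hvs
      have h2 : ‖(v:X) + x‖ ≥ ‖(v:X) + y‖ - ‖x - y‖ := by
        have h3 : (v:X) + y = ((v:X) + x) - (x - y) := by abel
        have h4 : ‖((v:X) + x) - (x - y)‖ ≤ ‖(v:X) + x‖ + ‖x - y‖ := norm_sub_le _ _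
        rw [← h3] at h4
        linarith
      have h5 : ‖w + x‖ ≥ ‖(v:X) + x‖ - ‖w - (v:X)‖ := by
        have h6 : (v:X) + x = (w + x) - (w - (v:X)) := by abel
        have h7 : ‖(w + x) - (w - (v:X))‖ ≤ ‖w + x‖ + ‖w - (v:X)‖ := norm_sub_le _ _
        rw [← h6] at h7
        linarith
      have : ‖w + x‖ > 2 - 3*δ := by linarith
      rw [hδdef] at this
      linarith
    have claimD : ∀ w : X, w ∈ Y → ‖w‖ = 1 → ∀ a c : ℝ, 0 ≤ a → 0 ≤ c →
        ‖a • w + c • x‖ ≥ (1 - ε) * (a + c) := by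
      intro w hwY hwn a c ha hc
      have hwx := claimC w hwY hwn
      have hwx0 : w + x ≠ 0 := by
        intro h0
        rw [h0, norm_zero] at hwx
        linarith
      obtain ⟨g, hgn, hgwx⟩ := exists_dual_vector ℝ (w + x) (norm_ne_zero_iff.mpr hwx0)
      have bdd : ∀ z : X, ‖z‖ = 1 → |g z| ≤ 1 := by
        intro z hz
        calc |g z| ≤ ‖g‖ * ‖z‖ := g.le_opNorm z
          _ = 1 := by rw [hgn, hz, mul_one]
      have hgw : g w ≥ 1 - ε := by
        have h1 : g w + g x = ‖w + x‖ := by rw [← map_add]; exact hgwx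
        have h2 := abs_le.mp (bdd x hxn)
        have h3 : ε₀/2 ≤ ε := by linarith
        linarith
      have hgx : g x ≥ 1 - ε := by
        have h1 : g w + g x = ‖w + x‖ := by rw [← map_add]; exact hgwx
        have h2 := abs_le.mp (bdd w hwn)
        have h3 : ε₀/2 ≤ ε := by linarith
        linarith
      have h1 : g (a • w + c • x) = a * g w + c * g x := by
        rw [map_add, map_smul, map_smul]; rfl
      have h2 : ‖a • w + c • x‖ ≥ g (a • w + c • x) := by
        calc g (a • w + c • x) ≤ |g (a • w + c • x)| := le_abs_self _
          _ ≤ ‖g‖ * ‖a • w + c • x‖ := g.le_opNorm _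
          _ = ‖a • w + c • x‖ := by rw [hgn, one_mul]
      have h3 : a * g w ≥ a * (1 - ε) := mul_le_mul_of_nonneg_left hgw ha
      have h4 : c * g x ≥ c * (1 - ε) := mul_le_mul_of_nonneg_left hgx hc
      rw [h1] at h2
      nlinarith
    refine ⟨x, hxn, ?_⟩
    intro w hwY l
    rcases eq_or_ne w 0 with rfl | hw0
    · rw [zero_add, norm_smul, Real.norm_eq_abs, hxn, mul_one, norm_zero, zero_add]
      nlinarith [abs_nonneg l]
    rcases eq_or_ne l 0 with rfl | hl0
    · rw [zero_smul, add_zero, abs_zero, add_zero]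
      nlinarith [norm_nonneg w]
    have hwn : 0 < ‖w‖ := norm_pos_iff.mpr hw0
    set cc : ℝ := |l| / l with hccdef
    have hcc : |cc| = 1 := by
      rw [hccdef, abs_div, abs_abs, div_self (abs_ne_zero.mpr hl0)]
    have hccl : cc * l = |l| := div_mul_cancel₀ _ hl0
    have hkey : ‖w + l • x‖ = ‖cc • w + |l| • x‖ := by
      have h1 : cc • (w + l • x) = cc • w + |l| • x := by
        rw [smul_add, smul_smul, hccl]
      calc ‖w + l • x‖ = |cc| * ‖w + l • x‖ := by rw [hcc, one_mul]
        _ = ‖cc • (w + l • x)‖ := by rw [norm_smul, Real.norm_eq_abs]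
        _ = ‖cc • w + |l| • x‖ := by rw [h1]
    set u : X := ‖w‖⁻¹ • (cc • w) with hudef
    have huY : u ∈ Y := Y.smul_mem _ (Y.smul_mem _ hwY)
    have hun : ‖u‖ = 1 := by
      rw [hudef, norm_smul, norm_smul, norm_inv, norm_norm, Real.norm_eq_abs, hcc,
        one_mul, inv_mul_cancel₀ hwn.ne']
    have hsm : ‖w‖ • u = cc • w := by
      rw [hudef, smul_smul, mul_inv_cancel₀ hwn.ne', one_smul]
    have := claimD u huY hun ‖w‖ |l| (norm_nonneg w) (abs_nonneg l)
    rw [hsm, ← hkey] at this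
    exact this
  · -- b empty: Y is trivial
    have hbe : b = ∅ := Set.not_nonempty_iff_eq_empty.mp hbne
    have hSe : S = ∅ := by
      rw [hbe] at hbcover
      simpa using Set.subset_empty_iff.mp (by simpa using hbcover)
    have hY0 : ∀ w : X, w ∈ Y → w = 0 := by
      intro w hw
      by_contra hw0
      have hwn : 0 < ‖w‖ := norm_pos_iff.mpr hw0
      have : (‖w‖⁻¹ • (⟨w, hw⟩ : Y)) ∈ S := by
        rw [hSdef, mem_sphere_iff_norm, sub_zero]
        have : ‖(‖w‖⁻¹ • (⟨w, hw⟩ : Y) : Y)‖ = ‖w‖⁻¹ * ‖w‖ := by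
          rw [norm_smul, norm_inv, norm_norm]; rfl
        rw [this, inv_mul_cancel₀ hwn.ne']
      rw [hSe] at this
      exact this
    obtain ⟨x₀, hx₀⟩ := exists_ne (0 : X)
    have hx₀n : 0 < ‖x₀‖ := norm_pos_iff.mpr hx₀
    refine ⟨‖x₀‖⁻¹ • x₀, ?_, ?_⟩
    · rw [norm_smul, norm_inv, norm_norm, inv_mul_cancel₀ hx₀n.ne']
    · intro w hw l
      rw [hY0 w hw, zero_add, norm_zero, zero_add, norm_smul, Real.norm_eq_abs]
      have h1 : ‖‖x₀‖⁻¹ • x₀‖ = 1 := by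
        rw [norm_smul, norm_inv, norm_norm, inv_mul_cancel₀ hx₀n.ne']
      rw [h1, mul_one]
      nlinarith [abs_nonneg l]
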